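/- Assume 0 < λ < 1 and 1 < γ < 3. Let P₅ := (V₅, C₅) with V₅ := 2/(γ−3) and C₅ := (γ−1)/(3−γ), and let F_V, F_C, G_V, G_C denote the first-order partial derivatives of F and G evaluated at P₅. Then F_C > 0, F_V > 0, G_C < 0, G_V < 0, and the following chain of inequalities holds: −F_V/F_C < −1 < −G_V/G_C < −ℓ^{−1}. -/

import Mathlib

noncomputable def ell (γ : ℝ) : ℝ := 2 / (γ - 1)
noncomputable def Vstar (γ lam : ℝ) : ℝ := ell γ * (1 - lam)
noncomputable def k1 (γ lam : ℝ) : ℝ := (1 / ell γ - 1) * (lam - 1)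
noncomputable def k0 (γ lam : ℝ) : ℝ := (lam - 1) / ell γ
noncomputable def Dfun (V C : ℝ) : ℝ := (1 + V) ^ 2 - C ^ 2
noncomputable def Gfun (γ lam V C : ℝ) : ℝ :=
  C ^ 2 * (V - Vstar γ lam) - V * (1 + V) * (lam + V)
noncomputable def Ffun (γ lam V C : ℝ) : ℝ :=
  C * (C ^ 2 - (1 + V) ^ 2 + k1 γ lam * (1 + V) - k0 γ lam)

lemma derivF_V (γ lam C x : ℝ) :
    deriv (fun V => Ffun γ lam V C) x = C * (k1 γ lam - 2 * (1 + x)) := by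
  have h1 : HasDerivAt (fun V : ℝ => 1 + V) 1 x := (hasDerivAt_id x).const_add 1
  have h2 : HasDerivAt (fun V : ℝ => (1 + V) ^ 2) (2 * (1 + x)) x := by
    simpa using h1.fun_pow 2
  have h3 : HasDerivAt (fun V : ℝ => C ^ 2 - (1 + V) ^ 2) (-(2 * (1 + x))) x :=
    h2.const_sub _
  have h4 : HasDerivAt (fun V : ℝ => k1 γ lam * (1 + V)) (k1 γ lam * 1) x :=
    h1.const_mul _
  have h5 := ((h3.fun_add h4).sub_const (k0 γ lam)).const_mul C
  unfold Ffun
  rw [h5.deriv]; ring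

lemma derivF_C (γ lam V x : ℝ) :
    deriv (fun C => Ffun γ lam V C) x =
      (x ^ 2 - (1 + V) ^ 2 + k1 γ lam * (1 + V) - k0 γ lam) + x * (2 * x) := by
  have hinner : HasDerivAt
      (fun C : ℝ => C ^ 2 - (1 + V) ^ 2 + k1 γ lam * (1 + V) - k0 γ lam)
      ((2 : ℕ) * x ^ 1) x :=
    (((hasDerivAt_pow 2 x).sub_const _).add_const _).sub_const _
  have h := (hasDerivAt_id' x).fun_mul hinner
  unfold Ffun
  rw [h.deriv]; push_cast; ring

lemma derivG_V (γ lam C x : ℝ) :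
    deriv (fun V => Gfun γ lam V C) x =
      C ^ 2 - ((1 + x) * (lam + x) + x * (lam + x) + x * (1 + x)) := by
  have hA : HasDerivAt (fun V : ℝ => C ^ 2 * (V - Vstar γ lam)) (C ^ 2 * 1) x :=
    ((hasDerivAt_id x).sub_const _).const_mul _
  have h1 : HasDerivAt (fun V : ℝ => 1 + V) 1 x := (hasDerivAt_id x).const_add 1
  have hl : HasDerivAt (fun V : ℝ => lam + V) 1 x := (hasDerivAt_id x).const_add lam
  have hB : HasDerivAt (fun V : ℝ => V * (1 + V)) (1 * (1 + x) + x * 1) x :=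
    (hasDerivAt_id x).mul h1
  have hC : HasDerivAt (fun V : ℝ => V * (1 + V) * (lam + V))
      ((1 * (1 + x) + x * 1) * (lam + x) + x * (1 + x) * 1) x := hB.mul hl
  have h := hA.fun_sub hC
  unfold Gfun
  rw [h.deriv]; ring

lemma derivG_C (γ lam V x : ℝ) :
    deriv (fun C => Gfun γ lam V C) x = 2 * x * (V - Vstar γ lam) := by
  have h := ((hasDerivAt_pow 2 x).mul_const (V - Vstar γ lam)).sub_const
      (V * (1 + V) * (lam + V))
  unfold Gfun
  rw [h.deriv]; push_cast; ring

set_option maxHeartbeats 1000000 in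
/-- signs and slope inequalities for the partial derivatives of `F`
and `G` at `P₅` when `0 < λ < 1` and `1 < γ < 3`. -/
theorem stmt_9 (γ lam : ℝ) (hγ1 : 1 < γ) (hγ3 : γ < 3)
    (hlam0 : 0 < lam) (hlam1 : lam < 1) :
    let V5 : ℝ := 2 / (γ - 3)
    let C5 : ℝ := (γ - 1) / (3 - γ)
    let FV : ℝ := deriv (fun V => Ffun γ lam V C5) V5
    let FC : ℝ := deriv (fun C => Ffun γ lam V5 C) C5
    let GV : ℝ := deriv (fun V => Gfun γ lam V C5) V5
    let GC : ℝ := deriv (fun C => Gfun γ lam V5 C) C5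
    0 < FC ∧ 0 < FV ∧ GC < 0 ∧ GV < 0 ∧
    -FV / FC < -1 ∧ -1 < -GV / GC ∧ -GV / GC < -(ell γ)⁻¹ := by
  intro V5 C5 FV FC GV GC
  have hs : (0:ℝ) < 3 - γ := by linarith
  have ht : (0:ℝ) < γ - 1 := by linarith
  have hs0 : (3:ℝ) - γ ≠ 0 := ne_of_gt hs
  have ht0 : γ - 1 ≠ 0 := ne_of_gt ht
  have hg3 : γ - 3 ≠ 0 := by intro h; apply hs0; linarith
  have eV5 : V5 = 2 / (γ - 3) := rfl
  have eC5 : C5 = (γ - 1) / (3 - γ) := rfl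
  have eFV : FV = C5 * (k1 γ lam - 2 * (1 + V5)) := derivF_V γ lam C5 V5
  have eFC : FC = (C5 ^ 2 - (1 + V5) ^ 2 + k1 γ lam * (1 + V5) - k0 γ lam)
      + C5 * (2 * C5) := derivF_C γ lam V5 C5
  have eGV : GV = C5 ^ 2 - ((1 + V5) * (lam + V5) + V5 * (lam + V5) + V5 * (1 + V5)) :=
    derivG_V γ lam C5 V5
  have eGC : GC = 2 * C5 * (V5 - Vstar γ lam) := derivG_C γ lam V5 C5
  clear_value V5 C5 FV FC GV GC
  have hC5pos : 0 < C5 := by rw [eC5]; positivity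
  have h1V : 1 + V5 = -C5 := by rw [eV5, eC5]; field_simp; ring
  have hk1 : k1 γ lam = ((3 - γ) / 2) * (1 - lam) := by
    unfold k1 ell; field_simp; ring
  have hk0 : k0 γ lam = (lam - 1) * (γ - 1) / 2 := by
    unfold k0 ell; field_simp
  have hk1pos : 0 < k1 γ lam := by rw [hk1]; exact mul_pos (by linarith) (by linarith)
  have hFCval : FC = 2 * ((γ - 1) / (3 - γ)) ^ 2 := by
    rw [eFC, h1V, hk1, hk0, eC5]; field_simp; ring
  have hFCpos : 0 < FC := by rw [hFCval]; positivity
  have hFVval : FV = C5 * (k1 γ lam + 2 * C5) := by rw [eFV, h1V]; ring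
  have hFVpos : 0 < FV := by
    rw [hFVval]; exact mul_pos hC5pos (by linarith)
  have hGVval : GV = ((3 - γ) ^ 2 * (1 - lam) + 4 * (3 - γ) * lam - 8) / (3 - γ) ^ 2 := by
    rw [eGV, eV5, eC5]; field_simp; ring
  have hGCval : GC = (4 * (3 - γ) * lam - 8) / (3 - γ) ^ 2 := by
    rw [eGC, eV5, eC5]; unfold Vstar ell; field_simp; ring
  have hGCneg : GC < 0 := by
    rw [hGCval]
    apply div_neg_of_neg_of_pos _ (by positivity)
    nlinarith
  have hGVneg : GV < 0 := by
    rw [hGVval]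
    apply div_neg_of_neg_of_pos _ (by positivity)
    nlinarith [mul_pos hs hlam0, sq_nonneg (3 - γ), mul_pos (mul_pos hs hs) (sub_pos.2 hlam1)]
  have hGCneg' : 0 < -GC := by linarith
  have hdiff : GV - GC = 1 - lam := by rw [hGVval, hGCval]; field_simp; ring
  have hinv : (ell γ)⁻¹ = (γ - 1) / 2 := by unfold ell; rw [inv_div]
  refine ⟨hFCpos, hFVpos, hGCneg, hGVneg, ?_, ?_, ?_⟩
  · rw [neg_div, neg_lt_neg_iff, lt_div_iff₀ hFCpos]
    have : FV - FC = ((γ - 1) / (3 - γ)) * k1 γ lam := by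
      rw [hFVval, hFCval, eC5]; ring
    have hp : 0 < FV - FC := by rw [this]; exact mul_pos (div_pos ht hs) hk1pos
    linarith
  · rw [neg_div, neg_lt_neg_iff,
      show GV / GC = -GV / -GC by rw [neg_div_neg_eq], div_lt_one hGCneg']
    linarith
  · rw [neg_div, neg_lt_neg_iff,
      show GV / GC = -GV / -GC by rw [neg_div_neg_eq], lt_div_iff₀ hGCneg']
    rw [hinv]
    have hkey : (γ - 1) / 2 * GC - GV
        = ((3 - γ) * (4 - (3 - γ) * (1 + lam))) / (3 - γ) ^ 2 := by
      rw [hGVval, hGCval]; field_simp; ring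
    have hpos : 0 < (γ - 1) / 2 * GC - GV := by
      rw [hkey]
      apply div_pos _ (by positivity)
      apply mul_pos hs
      nlinarith
    linarith
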